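/- Let F be a face of the finite Coxeter complex of a root system Φ with Weyl group W. Then there is a unique w ∈ W such that F = w · C_J (where J = Δ \ col(F)) and D(w) ⊆ col(F); this w is the unique element with w · C_∅ = F C_∅ (the Tits projection of F onto the fundamental chamber). -/

import Mathlib

open scoped RealInnerProductSpace Classical

noncomputable section

variable (V : Type*) [NormedAddCommGroup V] [InnerProductSpace ℝ V] [FiniteDimensional ℝ V]

/-- The orthogonal reflection through the hyperplane orthogonal to `β`. -/
def sRefl (β : V) : V ≃ₗᵢ[ℝ] V := Submodule.reflection ((ℝ ∙ β)ᗮ)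

/-- `β` is a nonnegative linear combination of the elements of `Δ`. -/
def IsNonneg (Δ : Finset V) (β : V) : Prop :=
  ∃ c : V → ℝ, (∀ α, 0 ≤ c α) ∧ β = ∑ α ∈ Δ, c α • α

/-- Root system axioms with simple system `Δ`. -/
structure IsRootSystem (Φ Δ : Finset V) : Prop where
  subset : Δ ⊆ Φ
  nonzero : (0 : V) ∉ Φ
  neg_mem : ∀ β ∈ Φ, -β ∈ Φ
  refl_mem : ∀ α ∈ Φ, ∀ β ∈ Φ, sRefl V α β ∈ Φ
  indep : LinearIndependent ℝ (fun α : Δ => (α : V))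
  pos_or_neg : ∀ β ∈ Φ, IsNonneg V Δ β ∨ IsNonneg V Δ (-β)

/-- The Weyl group: the subgroup generated by the reflections in the roots. -/
def Weyl (Φ : Finset V) : Subgroup (V ≃ₗᵢ[ℝ] V) :=
  Subgroup.closure {g | ∃ β ∈ Φ, g = sRefl V β}

/-- Length with respect to the simple reflections. -/
def len (Δ : Finset V) (w : V ≃ₗᵢ[ℝ] V) : ℕ :=
  sInf {k | ∃ l : List V, l.length = k ∧ (∀ α ∈ l, α ∈ Δ) ∧ (l.map (sRefl V)).prod = w}

/-- Descent set of `w`. -/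
def Dset (Δ : Finset V) (w : V ≃ₗᵢ[ℝ] V) : Finset V :=
  Δ.filter fun α => IsNonneg V Δ (-(w α))

/-- `θ` is the highest root. -/
def IsHighest (Φ Δ : Finset V) (θ : V) : Prop :=
  θ ∈ Φ ∧ IsNonneg V Δ θ ∧ ∀ β ∈ Φ, IsNonneg V Δ β → IsNonneg V Δ (θ - β)

def Crystallographic (Φ : Finset V) : Prop :=
  ∀ α ∈ Φ, ∀ β ∈ Φ, ∃ n : ℤ, 2 * (inner ℝ β α : ℝ) = (n : ℝ) * (inner ℝ α α : ℝ)

def IrreducibleSystem (Δ : Finset V) : Prop :=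
  ∀ s ⊆ Δ, (∀ α ∈ s, ∀ β ∈ Δ, β ∉ s → (inner ℝ α β : ℝ) = 0) → s = ∅ ∨ s = Δ

/-- Affine descent set of `w`, relative to the highest root `θ`. -/
def Dtilde (Δ : Finset V) (θ : V) (w : V ≃ₗᵢ[ℝ] V) : Finset V :=
  (insert (-θ) Δ).filter fun α => IsNonneg V Δ (-(w α))

/-- The descent-algebra basis element `x_J`. -/
def xJ (Φ Δ J : Finset V) : MonoidAlgebra ℤ (Weyl V Φ) :=
  ∑ᶠ w : Weyl V Φ, if Dset V Δ (w : V ≃ₗᵢ[ℝ] V) ⊆ J then MonoidAlgebra.single w 1 else 0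

/-- The affine analogue `x̃_K`. -/
def xT (Φ Δ : Finset V) (θ : V) (K : Finset V) : MonoidAlgebra ℤ (Weyl V Φ) :=
  ∑ᶠ w : Weyl V Φ, if Dtilde V Δ θ (w : V ≃ₗᵢ[ℝ] V) ⊆ K then MonoidAlgebra.single w 1 else 0

def yJ (Φ Δ J : Finset V) : MonoidAlgebra ℤ (Weyl V Φ) :=
  ∑ᶠ w : Weyl V Φ, if Dset V Δ (w : V ≃ₗᵢ[ℝ] V) = J then MonoidAlgebra.single w 1 else 0

def yT (Φ Δ : Finset V) (θ : V) (K : Finset V) : MonoidAlgebra ℤ (Weyl V Φ) :=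
  ∑ᶠ w : Weyl V Φ, if Dtilde V Δ θ (w : V ≃ₗᵢ[ℝ] V) = K then MonoidAlgebra.single w 1 else 0


/-- The face `C_J` of the fundamental chamber of the Coxeter arrangement:
`⟪λ,α⟫ = 0` for `α ∈ J` and `⟪λ,α⟫ > 0` for `α ∈ Δ \\ J`. -/
def CJ (Δ J : Finset V) : Set V :=
  {x | (∀ α ∈ J, (inner ℝ x α : ℝ) = 0) ∧ ∀ α ∈ Δ, α ∉ J → 0 < (inner ℝ x α : ℝ)}

set_option linter.unusedSectionVars false

section Lemmas

variable {V}

theorem sRefl_apply (β x : V) :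
    sRefl V β x = x - (2 * (inner ℝ x β : ℝ) / (‖β‖^2)) • β := by
  rw [sRefl, Submodule.reflection_orthogonal_apply, Submodule.reflection_singleton_apply]
  rw [real_inner_comm]
  push_cast
  simp only [RCLike.ofReal_real_eq_id, id_eq]
  rw [two_smul]
  module

theorem sRefl_self (β : V) : sRefl V β β = -β :=
  Submodule.reflection_orthogonalComplement_singleton_eq_neg β

theorem sRefl_sRefl (β x : V) : sRefl V β (sRefl V β x) = x :=
  Submodule.reflection_reflection _ _

@[simp] theorem sRefl_inv (β : V) : (sRefl V β)⁻¹ = sRefl V β := rfl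

theorem sRefl_mul_self (β : V) : sRefl V β * sRefl V β = 1 :=
  Submodule.reflection_mul_reflection _

theorem sRefl_smul {c : ℝ} (hc : c ≠ 0) (β : V) : sRefl V (c • β) = sRefl V β := by
  unfold sRefl
  congr 1
  congr 1
  exact Submodule.span_singleton_smul_eq (IsUnit.mk0 c hc) β
theorem sRefl_conj (w : V ≃ₗᵢ[ℝ] V) (β : V) :
    sRefl V (w β) = w * sRefl V β * w⁻¹ := by
  ext x
  have h1 : (w * sRefl V β * w⁻¹) x = w (sRefl V β (w.symm x)) := rfl
  have h2 : (inner ℝ x (w β) : ℝ) = inner ℝ (w.symm x) β := by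
    conv_lhs => rw [← w.apply_symm_apply x]
    exact w.inner_map_map _ _
  rw [h1, sRefl_apply, sRefl_apply, map_sub, map_smul, w.apply_symm_apply, h2, w.norm_map]

theorem isNonneg_simple {Δ : Finset V} {α : V} (hα : α ∈ Δ) : IsNonneg V Δ α := by
  refine ⟨fun γ => if γ = α then 1 else 0, fun γ => by positivity, ?_⟩
  simp [ite_smul, hα]

/-- coefficients of a zero combination vanish -/
theorem coeff_zero {Φ Δ : Finset V} (h : IsRootSystem V Φ Δ) {c : V → ℝ}
    (hc : ∑ α ∈ Δ, c α • α = 0) : ∀ α ∈ Δ, c α = 0 := by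
  intro α hα
  have h2 : ∑ α : Δ, c α • (α : V) = 0 := by
    rw [Finset.sum_coe_sort Δ (fun α => c α • α)]; exact hc
  have := Fintype.linearIndependent_iff.mp h.indep (fun α : Δ => c α) h2
  exact this ⟨α, hα⟩

theorem not_isNonneg_both {Φ Δ : Finset V} (h : IsRootSystem V Φ Δ) {β : V} (hβ : β ∈ Φ)
    (h1 : IsNonneg V Δ β) (h2 : IsNonneg V Δ (-β)) : False := by
  obtain ⟨c, hc, hcs⟩ := h1
  obtain ⟨d, hd, hds⟩ := h2
  have hz : ∑ α ∈ Δ, (c α + d α) • α = 0 := by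
    simp only [add_smul, Finset.sum_add_distrib, ← hcs, ← hds]
    abel
  have hcz : ∀ α ∈ Δ, c α = 0 := by
    intro α hα
    have := coeff_zero h hz α hα
    nlinarith [hc α, hd α]
  have : β = 0 := by
    rw [hcs]
    exact Finset.sum_eq_zero fun α hα => by rw [hcz α hα, zero_smul]
  exact h.nonzero (this ▸ hβ)

theorem isNonneg_neg_of_not {Φ Δ : Finset V} (h : IsRootSystem V Φ Δ) {β : V} (hβ : β ∈ Φ)
    (h1 : ¬ IsNonneg V Δ β) : IsNonneg V Δ (-β) := (h.pos_or_neg β hβ).resolve_left h1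

theorem isNonneg_of_not_neg {Φ Δ : Finset V} (h : IsRootSystem V Φ Δ) {β : V} (hβ : β ∈ Φ)
    (h1 : ¬ IsNonneg V Δ (-β)) : IsNonneg V Δ β := (h.pos_or_neg β hβ).resolve_right h1

/-- positive inner product with chamber points -/
theorem inner_pos_of_isNonneg {Φ Δ : Finset V} (h : IsRootSystem V Φ Δ) {β x : V} (hβ : β ∈ Φ)
    (hp : IsNonneg V Δ β) (hx : ∀ α ∈ Δ, 0 < (inner ℝ x α : ℝ)) : 0 < (inner ℝ x β : ℝ) := by
  obtain ⟨c, hc, hcs⟩ := hp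
  have hβ0 : β ≠ 0 := fun h0 => h.nonzero (h0 ▸ hβ)
  have hinner : (inner ℝ x β : ℝ) = ∑ α ∈ Δ, c α * (inner ℝ x α : ℝ) := by
    rw [hcs, inner_sum]
    exact Finset.sum_congr rfl fun α hα => real_inner_smul_right x α (c α)
  rw [hinner]
  have hex : ∃ α ∈ Δ, c α ≠ 0 := by
    by_contra hno
    push_neg at hno
    exact hβ0 (by rw [hcs]; exact Finset.sum_eq_zero fun α hα => by rw [hno α hα, zero_smul])
  obtain ⟨α₀, hα₀, hc₀⟩ := hex
  refine Finset.sum_pos' (fun α hα => mul_nonneg (hc α) (le_of_lt (hx α hα))) ?_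
  exact ⟨α₀, hα₀, mul_pos ((hc α₀).lt_of_ne (Ne.symm hc₀)) (hx α₀ hα₀)⟩
/-- If a simple reflection sends the positive root `β` to a negative root, then `β` is a
positive multiple of the simple root, hence defines the same reflection. -/
theorem sRefl_eq_of_neg {Φ Δ : Finset V} (h : IsRootSystem V Φ Δ) {s β : V}
    (hs : s ∈ Δ) (hβ : β ∈ Φ) (hpos : IsNonneg V Δ β)
    (hneg : IsNonneg V Δ (-(sRefl V s β))) : sRefl V β = sRefl V s := by
  set t : ℝ := 2 * (inner ℝ β s : ℝ) / (‖s‖^2) with ht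
  have hst : sRefl V s β = β - t • s := sRefl_apply s β
  obtain ⟨c, hc, hcs⟩ := hpos
  obtain ⟨d, hd, hds⟩ := hneg
  have hz : ∑ γ ∈ Δ, (c γ + d γ - (if γ = s then t else 0)) • γ = 0 := by
    simp only [sub_smul, add_smul, Finset.sum_sub_distrib, Finset.sum_add_distrib,
      ← hcs, ← hds, ite_smul, zero_smul, Finset.sum_ite_eq' Δ s (fun γ => t • γ), if_pos hs]
    rw [hst]
    abel
  have hco : ∀ γ ∈ Δ, γ ≠ s → c γ = 0 := by
    intro γ hγ hγs
    have := coeff_zero h hz γ hγ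
    rw [if_neg hγs] at this
    nlinarith [hc γ, hd γ]
  have hβs : β = c s • s := by
    rw [hcs, Finset.sum_eq_single_of_mem s hs]
    intro γ hγ hγs
    rw [hco γ hγ hγs, zero_smul]
  have hcs0 : c s ≠ 0 := by
    intro h0
    apply h.nonzero
    rw [h0, zero_smul] at hβs
    exact hβs ▸ hβ
  rw [hβs, sRefl_smul hcs0]

theorem prod_maps_root {Φ Δ : Finset V} (h : IsRootSystem V Φ Δ) {l : List V}
    (hl : ∀ α ∈ l, α ∈ Δ) {β : V} (hβ : β ∈ Φ) : (l.map (sRefl V)).prod β ∈ Φ := by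
  induction l with
  | nil => simpa using hβ
  | cons a rest ih =>
    rw [List.map_cons, List.prod_cons]
    have h1 : (sRefl V a * (rest.map (sRefl V)).prod) β
        = sRefl V a ((rest.map (sRefl V)).prod β) := rfl
    rw [h1]
    exact h.refl_mem a (h.subset (hl a List.mem_cons_self)) _
      (ih fun γ hγ => hl γ (List.mem_cons_of_mem a hγ))

theorem prod_mem_weyl {Φ Δ : Finset V} (h : IsRootSystem V Φ Δ) {l : List V}
    (hl : ∀ α ∈ l, α ∈ Δ) : (l.map (sRefl V)).prod ∈ Weyl V Φ := by
  induction l with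
  | nil => exact one_mem _
  | cons a rest ih =>
    rw [List.map_cons, List.prod_cons]
    exact mul_mem (Subgroup.subset_closure ⟨a, h.subset (hl a List.mem_cons_self), rfl⟩)
      (ih fun γ hγ => hl γ (List.mem_cons_of_mem a hγ))

/-- The exchange lemma. -/
theorem exchange {Φ Δ : Finset V} (h : IsRootSystem V Φ Δ) :
    ∀ (l : List V), (∀ α ∈ l, α ∈ Δ) → ∀ {α : V}, α ∈ Δ →
    IsNonneg V Δ (-((l.map (sRefl V)).prod α)) →
    ∃ l₂ : List V, (∀ γ ∈ l₂, γ ∈ Δ) ∧ l₂.length + 1 = l.length ∧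
      (l₂.map (sRefl V)).prod = (l.map (sRefl V)).prod * sRefl V α := by
  intro l
  induction l with
  | nil =>
    intro _ α hα hneg
    simp only [List.map_nil, List.prod_nil] at hneg
    have h1 : (1 : V ≃ₗᵢ[ℝ] V) α = α := rfl
    rw [h1] at hneg
    exact absurd hneg (fun hn => not_isNonneg_both h (h.subset hα) (isNonneg_simple hα) hn)
  | cons a rest ih =>
    intro hl α hα hneg
    have ha : a ∈ Δ := hl a List.mem_cons_self
    have hrest : ∀ γ ∈ rest, γ ∈ Δ := fun γ hγ => hl γ (List.mem_cons_of_mem a hγ)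
    set v₁ := (rest.map (sRefl V)).prod with hv₁
    have hprodc : ((a :: rest).map (sRefl V)).prod = sRefl V a * v₁ := by
      rw [List.map_cons, List.prod_cons]
    have happ : ((a :: rest).map (sRefl V)).prod α = sRefl V a (v₁ α) := by rw [hprodc]; rfl
    by_cases hc : IsNonneg V Δ (-(v₁ α))
    · obtain ⟨l₂, h1, h2, h3⟩ := ih hrest hα hc
      refine ⟨a :: l₂, ?_, ?_, ?_⟩
      · intro γ hγ
        rcases List.mem_cons.mp hγ with rfl | hγ
        · exact ha
        · exact h1 γ hγ
      · simp only [List.length_cons, h2]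
      · rw [List.map_cons, List.prod_cons, h3, hprodc, mul_assoc]
    · have hv₁α : v₁ α ∈ Φ := prod_maps_root h hrest (h.subset hα)
      have hpos : IsNonneg V Δ (v₁ α) := isNonneg_of_not_neg h hv₁α hc
      rw [happ] at hneg
      have hkey : sRefl V (v₁ α) = sRefl V a := sRefl_eq_of_neg h ha hv₁α hpos hneg
      have hconj : sRefl V (v₁ α) = v₁ * sRefl V α * v₁⁻¹ := sRefl_conj v₁ α
      refine ⟨rest, hrest, by simp, ?_⟩
      rw [hprodc, mul_assoc]
      have : v₁ * sRefl V α = sRefl V a * v₁ := by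
        rw [← hkey, hconj]
        group
      rw [this, ← mul_assoc, sRefl_mul_self, one_mul]
/-- Existence of a vector with prescribed inner products against the simple roots. -/
theorem exists_inner_eq {Φ Δ : Finset V} (h : IsRootSystem V Φ Δ) (c : V → ℝ) :
    ∃ x : V, ∀ α ∈ Δ, (inner ℝ x α : ℝ) = c α := by
  classical
  set T : (↥Δ → ℝ) → V := fun d => ∑ β : ↥Δ, d β • (β : V) with hT
  have hT_add : ∀ d e, T (d + e) = T d + T e := by
    intro d e; simp [T, add_smul, Finset.sum_add_distrib]
  have hT_smul : ∀ (r : ℝ) d, T (r • d) = r • T d := by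
    intro r d; simp [T, smul_smul, Finset.smul_sum]
  set G : (↥Δ → ℝ) →ₗ[ℝ] (↥Δ → ℝ) :=
    { toFun := fun d α => (inner ℝ (T d) (α : V) : ℝ)
      map_add' := by intro d e; funext α; rw [hT_add]; exact inner_add_left _ _ _
      map_smul' := by intro r d; funext α; rw [hT_smul]; simp [real_inner_smul_left]
    } with hG
  have hinj : Function.Injective G := by
    rw [← LinearMap.ker_eq_bot, LinearMap.ker_eq_bot']
    intro d hd
    have hTd : T d = 0 := by
      have h0 : (inner ℝ (T d) (T d) : ℝ) = 0 := by
        nth_rewrite 2 [hT]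
        rw [inner_sum]
        refine Finset.sum_eq_zero fun α _ => ?_
        rw [real_inner_smul_right]
        have hzero : (inner ℝ (T d) (α : V) : ℝ) = 0 := congrFun hd α
        rw [hzero, mul_zero]
      exact inner_self_eq_zero.mp h0
    exact funext fun α => Fintype.linearIndependent_iff.mp h.indep d hTd α
  have hsurj : Function.Surjective G := LinearMap.injective_iff_surjective.mp hinj
  obtain ⟨d, hd⟩ := hsurj (fun α => c (α : V))
  refine ⟨T d, fun α hα => ?_⟩
  exact congrFun hd ⟨α, hα⟩

theorem prod_reverse_eq_inv {l : List V} :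
    ((l.reverse.map (sRefl V)).prod) = ((l.map (sRefl V)).prod)⁻¹ := by
  induction l with
  | nil => simp
  | cons a rest ih =>
    rw [List.reverse_cons, List.map_append, List.prod_append, List.map_cons, List.prod_cons,
      List.map_cons, List.map_nil, List.prod_cons, List.prod_nil, ih, mul_inv_rev, sRefl_inv,
      mul_one]

/-- Every element of the Weyl group is a product of simple reflections. -/
theorem mem_simple_closure {Φ Δ : Finset V} (h : IsRootSystem V Φ Δ) {w : V ≃ₗᵢ[ℝ] V}
    (hw : w ∈ Weyl V Φ) :
    ∃ l : List V, (∀ α ∈ l, α ∈ Δ) ∧ (l.map (sRefl V)).prod = w := by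
  classical
  obtain ⟨x₀, hx₀⟩ := exists_inner_eq h (fun _ => (1:ℝ))
  have hx₀' : ∀ α ∈ Δ, 0 < (inner ℝ x₀ α : ℝ) := fun α hα => by rw [hx₀ α hα]; norm_num
  set W' : Subgroup (V ≃ₗᵢ[ℝ] V) := Subgroup.closure {g | ∃ α ∈ Δ, g = sRefl V α} with hW'
  set B := Φ.filter (fun β => IsNonneg V Δ β ∧ sRefl V β ∉ W') with hB
  have hBempty : B = ∅ := by
    by_contra hne
    obtain ⟨β, hβB, hmin⟩ := Finset.exists_min_image B (fun β => (inner ℝ x₀ β : ℝ))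
      (Finset.nonempty_of_ne_empty hne)
    obtain ⟨hβΦ, hβpos, hβW⟩ := Finset.mem_filter.mp hβB
    obtain ⟨c, hc, hcs⟩ := hβpos
    have hβ0 : β ≠ 0 := fun h0 => h.nonzero (h0 ▸ hβΦ)
    have hββ : 0 < (inner ℝ β β : ℝ) := by
      rw [real_inner_self_eq_norm_sq]
      have := norm_pos_iff.mpr hβ0
      positivity
    have hex : ∃ α ∈ Δ, 0 < c α * (inner ℝ β α : ℝ) := by
      by_contra hno
      push_neg at hno
      have hsum : (inner ℝ β β : ℝ) = ∑ α ∈ Δ, c α * (inner ℝ β α : ℝ) := by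
        nth_rewrite 2 [hcs]
        rw [inner_sum]
        exact Finset.sum_congr rfl fun α _ => real_inner_smul_right β α (c α)
      have : (inner ℝ β β : ℝ) ≤ 0 := hsum ▸ Finset.sum_nonpos hno
      linarith
    obtain ⟨α, hαΔ, hα⟩ := hex
    have hcα : 0 < c α := by
      rcases (hc α).lt_or_eq with h1 | h1
      · exact h1
      · rw [← h1, zero_mul] at hα; linarith
    have hβα : 0 < (inner ℝ β α : ℝ) := by nlinarith
    have hα0 : α ≠ 0 := fun h0 => h.nonzero (h0 ▸ h.subset hαΔ)
    set γ := sRefl V α β with hγ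
    have hγΦ : γ ∈ Φ := h.refl_mem α (h.subset hαΔ) β hβΦ
    set t : ℝ := 2 * (inner ℝ β α : ℝ) / (‖α‖^2) with htdef
    have ht : 0 < t := by
      apply div_pos (by linarith)
      have := norm_pos_iff.mpr hα0
      positivity
    have hγeq : γ = β - t • α := sRefl_apply α β
    have hlt : (inner ℝ x₀ γ : ℝ) < (inner ℝ x₀ β : ℝ) := by
      rw [hγeq, inner_sub_right, real_inner_smul_right]
      nlinarith [hx₀' α hαΔ]
    have hsαW' : sRefl V α ∈ W' := Subgroup.subset_closure ⟨α, hαΔ, rfl⟩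
    by_cases hγpos : IsNonneg V Δ γ
    · have hγW : sRefl V γ ∉ W' := by
        intro hγW
        apply hβW
        have hconj : sRefl V γ = sRefl V α * sRefl V β * (sRefl V α)⁻¹ :=
          sRefl_conj (sRefl V α) β
        have : sRefl V β = (sRefl V α)⁻¹ * sRefl V γ * sRefl V α := by rw [hconj]; group
        rw [this]
        exact mul_mem (mul_mem (inv_mem hsαW') hγW) hsαW'
      have hγB : γ ∈ B := Finset.mem_filter.mpr ⟨hγΦ, hγpos, hγW⟩
      exact absurd (hmin γ hγB) (not_le.mpr hlt)
    · have hneg : IsNonneg V Δ (-(sRefl V α β)) := isNonneg_neg_of_not h hγΦ hγpos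
      have hkey := sRefl_eq_of_neg h hαΔ hβΦ ⟨c, hc, hcs⟩ hneg
      exact hβW (hkey ▸ hsαW')
  have hall : ∀ β ∈ Φ, sRefl V β ∈ W' := by
    intro β hβΦ
    have hnotB : β ∉ B := by rw [hBempty]; exact Finset.notMem_empty β
    rcases h.pos_or_neg β hβΦ with hpos | hneg
    · by_contra hnW
      exact hnotB (Finset.mem_filter.mpr ⟨hβΦ, hpos, hnW⟩)
    · have hnegΦ : -β ∈ Φ := h.neg_mem β hβΦ
      have hnotB' : -β ∉ B := by rw [hBempty]; exact Finset.notMem_empty _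
      have hs : sRefl V (-β) ∈ W' := by
        by_contra hnW
        exact hnotB' (Finset.mem_filter.mpr ⟨hnegΦ, hneg, hnW⟩)
      have : sRefl V (-β) = sRefl V β := by
        rw [show (-β : V) = (-1 : ℝ) • β by simp, sRefl_smul (by norm_num : (-1:ℝ) ≠ 0)]
      rwa [this] at hs
  have hle : Weyl V Φ ≤ W' := by
    rw [Weyl, Subgroup.closure_le]
    rintro g ⟨β, hβ, rfl⟩
    exact hall β hβ
  have hwW' : w ∈ W' := hle hw
  refine Subgroup.closure_induction ?_ ⟨[], by simp, by simp⟩ ?_ ?_ hwW'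
  · rintro g ⟨α, hα, rfl⟩
    exact ⟨[α], by simpa using hα, by simp⟩
  · rintro a b _ _ ⟨la, hla, hpa⟩ ⟨lb, hlb, hpb⟩
    refine ⟨la ++ lb, ?_, by rw [List.map_append, List.prod_append, hpa, hpb]⟩
    intro γ hγ
    rcases List.mem_append.mp hγ with h1 | h1
    · exact hla γ h1
    · exact hlb γ h1
  · rintro a _ ⟨la, hla, hpa⟩
    exact ⟨la.reverse, fun γ hγ => hla γ (List.mem_reverse.mp hγ),
      by rw [prod_reverse_eq_inv, hpa]⟩

/-- If every simple root stays nonnegative, the element is the identity. -/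
theorem ascent_id {Φ Δ : Finset V} (h : IsRootSystem V Φ Δ) :
    ∀ (n : ℕ) (l : List V), l.length ≤ n → (∀ α ∈ l, α ∈ Δ) →
    (∀ α ∈ Δ, IsNonneg V Δ ((l.map (sRefl V)).prod α)) → (l.map (sRefl V)).prod = 1 := by
  intro n
  induction n with
  | zero =>
    intro l hlen _ _
    have : l = [] := List.eq_nil_of_length_eq_zero (Nat.le_zero.mp hlen)
    simp [this]
  | succ n ih =>
    intro l hlen hl hasc
    rcases List.eq_nil_or_concat l with rfl | ⟨l', a, rfl⟩
    · simp
    · rw [List.concat_eq_append] at hlen hl hasc ⊢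
      have ha : a ∈ Δ := hl a (by simp)
      have hl' : ∀ α ∈ l', α ∈ Δ := fun γ hγ => hl γ (by simp [hγ])
      set w' := (l'.map (sRefl V)).prod with hw'
      have hwp : ((l' ++ [a]).map (sRefl V)).prod = w' * sRefl V a := by
        rw [List.map_append, List.prod_append, List.map_cons, List.map_nil, List.prod_cons,
          List.prod_nil, mul_one]
      have hwa : ((l' ++ [a]).map (sRefl V)).prod a = -(w' a) := by
        rw [hwp]
        have h1 : (w' * sRefl V a) a = w' (sRefl V a a) := rfl
        rw [h1, sRefl_self, map_neg]
      have hda : IsNonneg V Δ (-(w' a)) := by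
        have := hasc a ha; rwa [hwa] at this
      obtain ⟨l₂, h1, h2, h3⟩ := exchange h l' hl' ha hda
      have hlen₂ : l₂.length ≤ n := by
        rw [List.length_append] at hlen
        simp only [List.length_singleton] at hlen
        omega
      have hres := ih l₂ hlen₂ h1 (by
        intro α hα
        rw [h3, ← hwp]
        exact hasc α hα)
      rw [hwp, ← h3, hres]

theorem eq_one_of_ascents {Φ Δ : Finset V} (h : IsRootSystem V Φ Δ) {w : V ≃ₗᵢ[ℝ] V}
    (hw : w ∈ Weyl V Φ) (hasc : ∀ α ∈ Δ, IsNonneg V Δ (w α)) : w = 1 := by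
  obtain ⟨l, hl, hp⟩ := mem_simple_closure h hw
  rw [← hp]
  exact ascent_id h l.length l le_rfl hl (by rw [hp]; exact hasc)
theorem weyl_maps_root {Φ Δ : Finset V} (h : IsRootSystem V Φ Δ) {w : V ≃ₗᵢ[ℝ] V}
    (hw : w ∈ Weyl V Φ) {β : V} (hβ : β ∈ Φ) : w β ∈ Φ := by
  obtain ⟨l, hl, hp⟩ := mem_simple_closure h hw
  rw [← hp]
  exact prod_maps_root h hl hβ

/-- The open fundamental chamber is rigid: a Weyl group element mapping a chamber point to a
chamber point is the identity. -/
theorem chamber_rigid {Φ Δ : Finset V} (h : IsRootSystem V Φ Δ) {w : V ≃ₗᵢ[ℝ] V}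
    (hw : w ∈ Weyl V Φ) {x : V} (hx : ∀ α ∈ Δ, 0 < (inner ℝ x α : ℝ))
    (hwx : ∀ α ∈ Δ, 0 < (inner ℝ (w x) α : ℝ)) : w = 1 := by
  apply eq_one_of_ascents h hw
  intro α hα
  have hwα : w α ∈ Φ := weyl_maps_root h hw (h.subset hα)
  by_contra hneg
  have hnn : IsNonneg V Δ (-(w α)) := isNonneg_neg_of_not h hwα hneg
  have h1 : 0 < (inner ℝ (w x) (-(w α)) : ℝ) :=
    inner_pos_of_isNonneg h (h.neg_mem _ hwα) hnn hwx
  have h2 : (inner ℝ (w x) (w α) : ℝ) = inner ℝ x α := w.inner_map_map x α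
  rw [inner_neg_right, h2] at h1
  linarith [hx α hα]

theorem cj_nonempty {Φ Δ : Finset V} (h : IsRootSystem V Φ Δ) {J : Finset V} (hJ : J ⊆ Δ) :
    ∃ x, x ∈ CJ V Δ J := by
  obtain ⟨x, hx⟩ := exists_inner_eq h (fun α => if α ∈ J then 0 else 1)
  refine ⟨x, fun α hα => ?_, fun α hα hαJ => ?_⟩
  · rw [hx α (hJ hα), if_pos hα]
  · rw [hx α hα, if_neg hαJ]; norm_num

theorem sRefl_fix_cj {Δ J : Finset V} {α x : V} (hα : α ∈ J) (hx : x ∈ CJ V Δ J) :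
    sRefl V α x = x := by
  rw [sRefl_apply, hx.1 α hα]
  simp

theorem sRefl_image_cj {Δ J : Finset V} {α : V} (hα : α ∈ J) :
    ⇑(sRefl V α) '' CJ V Δ J = CJ V Δ J := by
  ext y
  constructor
  · rintro ⟨x, hx, rfl⟩
    rwa [sRefl_fix_cj hα hx]
  · intro hy
    exact ⟨y, hy, sRefl_fix_cj hα hy⟩

theorem exists_min_rep {Φ Δ : Finset V} (h : IsRootSystem V Φ Δ) {J : Finset V} (hJ : J ⊆ Δ) :
    ∀ (n : ℕ) (l : List V), l.length ≤ n → (∀ α ∈ l, α ∈ Δ) →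
    ∃ w, w ∈ Weyl V Φ ∧ ⇑w '' CJ V Δ J = ⇑(l.map (sRefl V)).prod '' CJ V Δ J ∧
      Dset V Δ w ⊆ Δ \ J := by
  intro n
  induction n with
  | zero =>
    intro l hlen _
    have hnil : l = [] := List.eq_nil_of_length_eq_zero (Nat.le_zero.mp hlen)
    subst hnil
    refine ⟨1, one_mem _, by simp, ?_⟩
    intro α hαD
    have hαΔ := (Finset.mem_filter.mp hαD).1
    have hneg := (Finset.mem_filter.mp hαD).2
    have h1 : (1 : V ≃ₗᵢ[ℝ] V) α = α := rfl
    rw [h1] at hneg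
    exact (not_isNonneg_both h (h.subset hαΔ) (isNonneg_simple hαΔ) hneg).elim
  | succ n ih =>
    intro l hlen hl
    set w := (l.map (sRefl V)).prod with hwdef
    by_cases hd : Dset V Δ w ⊆ Δ \ J
    · exact ⟨w, prod_mem_weyl h hl, rfl, hd⟩
    · obtain ⟨α, hαD, hαnot⟩ := Finset.not_subset.mp hd
      have hαΔ : α ∈ Δ := (Finset.mem_filter.mp hαD).1
      have hαneg : IsNonneg V Δ (-(w α)) := (Finset.mem_filter.mp hαD).2
      have hαJ : α ∈ J := by
        by_contra hn
        exact hαnot (Finset.mem_sdiff.mpr ⟨hαΔ, hn⟩)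
      obtain ⟨l₂, h1, h2, h3⟩ := exchange h l hl hαΔ hαneg
      obtain ⟨w', hw1, hw2, hw3⟩ := ih l₂ (by omega) h1
      refine ⟨w', hw1, ?_, hw3⟩
      rw [hw2, h3]
      have hcomp : ⇑(w * sRefl V α) = ⇑w ∘ ⇑(sRefl V α) := rfl
      rw [hcomp, Set.image_comp, sRefl_image_cj hαJ]

theorem exists_min_rep' {Φ Δ : Finset V} (h : IsRootSystem V Φ Δ) {J : Finset V} (hJ : J ⊆ Δ)
    {w₀ : V ≃ₗᵢ[ℝ] V} (hw₀ : w₀ ∈ Weyl V Φ) :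
    ∃ w, w ∈ Weyl V Φ ∧ ⇑w '' CJ V Δ J = ⇑w₀ '' CJ V Δ J ∧ Dset V Δ w ⊆ Δ \ J := by
  obtain ⟨l, hl, hp⟩ := mem_simple_closure h hw₀
  obtain ⟨w, h1, h2, h3⟩ := exists_min_rep h hJ l.length l le_rfl hl
  exact ⟨w, h1, by rw [h2, hp], h3⟩
/-- Walking slightly from a point of the face `w · C_J` toward the fundamental chamber lands in
the chamber `w · C_∅`, provided `D(w) ⊆ Δ \ J`. -/
theorem walk_into_chamber {Φ Δ : Finset V} (h : IsRootSystem V Φ Δ) {J : Finset V}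
    {w : V ≃ₗᵢ[ℝ] V} (hw : w ∈ Weyl V Φ) (hD : Dset V Δ w ⊆ Δ \ J)
    {x y : V} (hx : x ∈ ⇑w '' CJ V Δ J) (hy : y ∈ CJ V Δ (∅ : Finset V)) :
    ∃ ε > (0:ℝ), ∀ t ∈ Set.Ioo (0:ℝ) ε,
      ((1-t) • x + t • y) ∈ ⇑w '' CJ V Δ (∅ : Finset V) := by
  obtain ⟨x', hx', rfl⟩ := hx
  have hy' : ∀ α ∈ Δ, 0 < (inner ℝ y α : ℝ) := fun α hα => hy.2 α hα (Finset.notMem_empty α)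
  have key : ∀ α ∈ Δ, ∃ ε : ℝ, 0 < ε ∧ ∀ t ∈ Set.Ioo (0:ℝ) ε,
      0 < (inner ℝ ((1-t) • (w x') + t • y) (w α) : ℝ) := by
    intro α hα
    have hxa : (inner ℝ (w x') (w α) : ℝ) = inner ℝ x' α := w.inner_map_map x' α
    have hexpand : ∀ t : ℝ, (inner ℝ ((1-t) • (w x') + t • y) (w α) : ℝ)
        = (1-t) * (inner ℝ x' α : ℝ) + t * (inner ℝ y (w α) : ℝ) := by
      intro t
      rw [inner_add_left, real_inner_smul_left, real_inner_smul_left, hxa]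
    by_cases hαJ : α ∈ J
    · have h0 : (inner ℝ x' α : ℝ) = 0 := hx'.1 α hαJ
      have hwα : w α ∈ Φ := weyl_maps_root h hw (h.subset hα)
      have hnd : α ∉ Dset V Δ w := fun hd => (Finset.mem_sdiff.mp (hD hd)).2 hαJ
      have hnneg : ¬ IsNonneg V Δ (-(w α)) := fun hn => hnd (Finset.mem_filter.mpr ⟨hα, hn⟩)
      have hpos := isNonneg_of_not_neg h hwα hnneg
      have hyp : 0 < (inner ℝ y (w α) : ℝ) := inner_pos_of_isNonneg h hwα hpos hy'
      refine ⟨1, one_pos, fun t ht => ?_⟩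
      rw [hexpand, h0, mul_zero, zero_add]
      exact mul_pos ht.1 hyp
    · have ha : 0 < (inner ℝ x' α : ℝ) := hx'.2 α hα hαJ
      set a := (inner ℝ x' α : ℝ) with hadef
      set b := (inner ℝ y (w α) : ℝ) with hbdef
      refine ⟨a / (|a - b| + 1), by positivity, fun t ht => ?_⟩
      rw [hexpand t]
      have h1 : t * (|a - b| + 1) < a := by
        rw [← lt_div_iff₀ (by positivity)]
        exact ht.2
      have h2 : t * (a - b) ≤ t * |a - b| :=
        mul_le_mul_of_nonneg_left (le_abs_self (a - b)) ht.1.le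
      nlinarith [ht.1]
  choose! e he1 he2 using key
  set S := insert (1:ℝ) (Δ.image e) with hS
  have hSne : S.Nonempty := ⟨1, Finset.mem_insert_self _ _⟩
  refine ⟨S.min' hSne, ?_, ?_⟩
  · rcases Finset.mem_insert.mp (S.min'_mem hSne) with h1 | h1
    · rw [h1]; norm_num
    · obtain ⟨α, hα, hαe⟩ := Finset.mem_image.mp h1
      rw [← hαe]
      exact he1 α hα
  · intro t ht
    set z := (1-t) • (w x') + t • y with hz
    refine ⟨w.symm z, ⟨fun α hα => (Finset.notMem_empty α hα).elim, fun α hα _ => ?_⟩,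
      w.apply_symm_apply z⟩
    have hzα : (inner ℝ (w.symm z) α : ℝ) = inner ℝ z (w α) := by
      conv_rhs => rw [← w.apply_symm_apply z]
      exact (w.inner_map_map (w.symm z) α).symm
    rw [hzα]
    refine he2 α hα t ⟨ht.1, lt_of_lt_of_le ht.2 ?_⟩
    exact Finset.min'_le S (e α) (Finset.mem_insert_of_mem (Finset.mem_image_of_mem e hα))

end Lemmas

/-- **Uniqueness of `w_F`** (Proposition on `D(w) ⊆ col(F)`): let `F = w₀ · C_J` be a face of
the finite Coxeter complex, with color set `col(F) = Δ \\ J`.  Then there is a unique `w` in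
the Weyl group with `F = w · C_J` and `D(w) ⊆ col(F)`; moreover the elements `w` satisfying
these conditions are exactly those with `w · C_∅ = F C_∅`, i.e. such that walking a small
positive distance from any point of `F` toward any point of the fundamental chamber `C_∅`
lands in the chamber `w · C_∅`. -/
theorem unique_wF (Φ Δ : Finset V) (h : IsRootSystem V Φ Δ)
    (J : Finset V) (hJ : J ⊆ Δ) (F : Set V)
    (w₀ : V ≃ₗᵢ[ℝ] V) (hw₀ : w₀ ∈ Weyl V Φ) (hF : F = ⇑w₀ '' CJ V Δ J) :
    (∃! w : V ≃ₗᵢ[ℝ] V, w ∈ Weyl V Φ ∧ F = ⇑w '' CJ V Δ J ∧ Dset V Δ w ⊆ Δ \ J) ∧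
    (∀ w : V ≃ₗᵢ[ℝ] V,
      (w ∈ Weyl V Φ ∧ F = ⇑w '' CJ V Δ J ∧ Dset V Δ w ⊆ Δ \ J) ↔
      (w ∈ Weyl V Φ ∧ ∀ x ∈ F, ∀ y ∈ CJ V Δ (∅ : Finset V),
        ∃ ε > (0 : ℝ), ∀ t ∈ Set.Ioo (0 : ℝ) ε,
          ((1 - t) • x + t • y) ∈ ⇑w '' CJ V Δ (∅ : Finset V))) := by
  classical
  obtain ⟨w₁, hw₁W, hw₁F, hw₁D⟩ := exists_min_rep' h hJ hw₀
  obtain ⟨x₀, hx₀⟩ := cj_nonempty h hJ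
  obtain ⟨y₀, hy₀⟩ := cj_nonempty h (Finset.empty_subset Δ)
  set P : (V ≃ₗᵢ[ℝ] V) → Prop :=
    fun w => w ∈ Weyl V Φ ∧ F = ⇑w '' CJ V Δ J ∧ Dset V Δ w ⊆ Δ \ J with hP
  set Q : (V ≃ₗᵢ[ℝ] V) → Prop :=
    fun w => w ∈ Weyl V Φ ∧ ∀ x ∈ F, ∀ y ∈ CJ V Δ (∅ : Finset V),
      ∃ ε > (0 : ℝ), ∀ t ∈ Set.Ioo (0 : ℝ) ε,
        ((1 - t) • x + t • y) ∈ ⇑w '' CJ V Δ (∅ : Finset V) with hQ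
  have hPQ : ∀ w, P w → Q w := by
    rintro w ⟨hwW, hwF, hwD⟩
    refine ⟨hwW, fun x hx y hy => ?_⟩
    exact walk_into_chamber h hwW hwD (hwF ▸ hx) hy
  have hxF : w₀ x₀ ∈ F := hF ▸ ⟨x₀, hx₀, rfl⟩
  have hQuniq : ∀ w w', Q w → Q w' → w = w' := by
    rintro w w' ⟨hwW, hw⟩ ⟨hw'W, hw'⟩
    obtain ⟨ε, hε, hh⟩ := hw (w₀ x₀) hxF y₀ hy₀
    obtain ⟨ε', hε', hh'⟩ := hw' (w₀ x₀) hxF y₀ hy₀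
    have hmin : 0 < min ε ε' := lt_min hε hε'
    set t := min ε ε' / 2 with htdef
    have ht : t ∈ Set.Ioo (0:ℝ) ε := by
      constructor
      · positivity
      · have := min_le_left ε ε'; simp only [htdef]; linarith
    have ht' : t ∈ Set.Ioo (0:ℝ) ε' := by
      constructor
      · positivity
      · have := min_le_right ε ε'; simp only [htdef]; linarith
    obtain ⟨a, ha, hae⟩ := hh t ht
    obtain ⟨b, hb, hbe⟩ := hh' t ht'
    have hab : w a = w' b := hae.trans hbe.symm
    have hcomp : (w'⁻¹ * w) a = b := by
      have h1 : (w'⁻¹ * w) a = w'.symm (w a) := rfl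
      rw [h1, hab, w'.symm_apply_apply]
    have haC : ∀ α ∈ Δ, 0 < (inner ℝ a α : ℝ) := fun α hα => ha.2 α hα (Finset.notMem_empty α)
    have hbC : ∀ α ∈ Δ, 0 < (inner ℝ ((w'⁻¹ * w) a) α : ℝ) := by
      rw [hcomp]
      exact fun α hα => hb.2 α hα (Finset.notMem_empty α)
    have hu : w'⁻¹ * w = 1 :=
      chamber_rigid h (mul_mem (inv_mem hw'W) hwW) haC hbC
    exact (inv_mul_eq_one.mp hu).symm
  have hP₁ : P w₁ := ⟨hw₁W, by rw [hF, hw₁F], hw₁D⟩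
  constructor
  · exact ⟨w₁, hP₁, fun w hw => hQuniq w w₁ (hPQ _ hw) (hPQ _ hP₁)⟩
  · intro w
    constructor
    · exact hPQ w
    · intro hQw
      have : w = w₁ := hQuniq w w₁ hQw (hPQ _ hP₁)
      rw [this]
      exact hP₁

end
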